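/- Fix integers m > 0 and d = m². Let S be the set of vectors in {−1, 0, 1}^d having exactly m nonzero coordinates. For fixed A ∈ S and B chosen uniformly at random from S, the probability that |⟨A, B⟩| = 1 (i.e., the supports of A and B overlap in exactly one coordinate) is at least some positive constant independent of m (in fact at least 1/e asymptotically, and bounded below by a universal constant c > 0 for all m ≥ 1). -/

import Mathlib

open Finset in
private lemma card_fiber' (d : ℕ) (s : Finset (Fin d)) :
    ((Fintype.piFinset fun _ => ({-1, 0, 1} : Finset ℤ)).filter
      (fun A => (Finset.univ.filter fun i => A i ≠ 0) = s)).card = 2 ^ s.card := by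
  have h : ((Fintype.piFinset fun _ => ({-1, 0, 1} : Finset ℤ)).filter
      (fun A => (Finset.univ.filter fun i => A i ≠ 0) = s))
      = Fintype.piFinset (fun i => if i ∈ s then ({-1, 1} : Finset ℤ) else {0}) := by
    ext A
    simp only [mem_filter, Fintype.mem_piFinset, Finset.ext_iff, mem_filter, mem_univ,
      true_and, mem_insert, mem_singleton]
    constructor
    · rintro ⟨h1, h2⟩ i
      by_cases hi : i ∈ s
      · simp only [hi, if_true, mem_insert, mem_singleton]
        rcases h1 i with h | h | h
        · exact Or.inl h
        · exact absurd hi (by rw [← h2 i]; simp [h])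
        · exact Or.inr h
      · simp only [hi, if_false, mem_singleton]
        by_contra hne
        exact hi ((h2 i).mp hne)
    · intro h1
      constructor
      · intro i
        rcases hi : decide (i ∈ s) with _ | _
        · have hi' : i ∉ s := by simpa using hi
          have := h1 i; rw [if_neg hi'] at this; simp at this; simp [this]
        · have hi' : i ∈ s := by simpa using hi
          have := h1 i; rw [if_pos hi'] at this; simp at this
          rcases this with h | h <;> simp [h]
      · intro i
        by_cases hi : i ∈ s
        · have := h1 i; rw [if_pos hi] at this; simp at this
          constructor
          · intro _; exact hi
          · intro _; rcases this with h | h <;> simp [h]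
        · have := h1 i; rw [if_neg hi] at this; simp at this
          simp [this, hi]
  rw [h, Fintype.card_piFinset]
  rw [← prod_filter_mul_prod_filter_not univ (· ∈ s)]
  have hs : univ.filter (· ∈ s) = s := by ext i; simp
  simp only [hs]
  rw [prod_congr rfl (fun i hi => by rw [if_pos hi]),
      prod_congr rfl (fun i (hi : i ∈ univ.filter (· ∉ s)) => by
        rw [if_neg (by simpa using (mem_filter.mp hi).2)])]
  simp

open Finset in
private lemma card_overlap' (d m : ℕ) (a : Finset (Fin d)) (ha : a.card = m) :
    ((powersetCard m (univ : Finset (Fin d))).filter (fun s => (a ∩ s).card = 1)).card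
      = m * (d - m).choose (m - 1) := by
  have key : (a ×ˢ powersetCard (m - 1) (univ \ a)).card
      = ((powersetCard m (univ : Finset (Fin d))).filter (fun s => (a ∩ s).card = 1)).card := by
    apply card_bij (fun p _ => insert p.1 p.2)
    · rintro ⟨x, t⟩ hp
      rw [mem_product] at hp
      obtain ⟨hx, ht⟩ := hp
      rw [mem_powersetCard] at ht
      obtain ⟨hts, htc⟩ := ht
      have hxt : x ∉ t := fun h => (mem_sdiff.mp (hts h)).2 hx
      rw [mem_filter, mem_powersetCard_univ]
      constructor
      · rw [card_insert_of_notMem hxt, htc]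
        have hm : 1 ≤ m := by
          by_contra h
          push_neg at h
          interval_cases m
          · rw [card_eq_zero] at ha; simp [ha] at hx
        omega
      · have : a ∩ insert x t = {x} := by
          ext i
          simp only [mem_inter, mem_insert, mem_singleton]
          constructor
          · rintro ⟨hia, hi | hi⟩
            · exact hi
            · exact absurd hia (mem_sdiff.mp (hts hi)).2
          · rintro rfl; exact ⟨hx, Or.inl rfl⟩
        rw [this, card_singleton]
    · rintro ⟨x, t⟩ hp ⟨x', t'⟩ hp' heq
      rw [mem_product, mem_powersetCard] at hp hp'
      have hxa : x ∈ a := hp.1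
      have hx'a : x' ∈ a := hp'.1
      have hxt : x ∉ t := fun h => (mem_sdiff.mp (hp.2.1 h)).2 hxa
      have hx't' : x' ∉ t' := fun h => (mem_sdiff.mp (hp'.2.1 h)).2 hx'a
      have hxx' : x = x' := by
        have : x ∈ insert x' t' := heq ▸ mem_insert_self x t
        rcases mem_insert.mp this with h | h
        · exact h
        · exact absurd hxa (mem_sdiff.mp (hp'.2.1 h)).2
      subst hxx'
      have : t = t' := by
        have h1 : (insert x t).erase x = (insert x t').erase x := by rw [heq]
        rwa [erase_insert hxt, erase_insert hx't'] at h1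
      simp [this]
    · intro s hs
      rw [mem_filter, mem_powersetCard_univ] at hs
      obtain ⟨hsc, hsi⟩ := hs
      obtain ⟨x, hx⟩ := card_eq_one.mp hsi
      have hxa : x ∈ a := (mem_inter.mp (hx ▸ mem_singleton_self x)).1
      have hxs : x ∈ s := (mem_inter.mp (hx ▸ mem_singleton_self x)).2
      refine ⟨(x, s \ a), ?_, ?_⟩
      · rw [mem_product, mem_powersetCard]
        refine ⟨hxa, fun i hi => mem_sdiff.mpr ⟨mem_univ i, (mem_sdiff.mp hi).2⟩, ?_⟩
        show (s \ a).card = m - 1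
        have := card_inter_add_card_sdiff s a
        rw [inter_comm, hx, card_singleton] at this
        omega
      · ext i
        simp only [mem_insert, mem_sdiff]
        constructor
        · rintro (rfl | ⟨hi, _⟩)
          · exact hxs
          · exact hi
        · intro hi
          by_cases hia : i ∈ a
          · left
            have : i ∈ a ∩ s := mem_inter.mpr ⟨hia, hi⟩
            rwa [hx, mem_singleton] at this
          · right; exact ⟨hi, hia⟩
  rw [← key, card_product, ha, card_powersetCard, card_sdiff_of_subset (subset_univ a), card_univ,
    Fintype.card_fin, ha]

def Svec (m : ℕ) : Finset (Fin (m ^ 2) → ℤ) :=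
  (Fintype.piFinset fun _ => ({-1, 0, 1} : Finset ℤ)).filter
    fun A => (Finset.univ.filter fun i => A i ≠ 0).card = m

open Finset in
private lemma card_Svec' (m : ℕ) : (Svec m).card = (m ^ 2).choose m * 2 ^ m := by
  have key : (Svec m).card = ∑ s ∈ powersetCard m (univ : Finset (Fin (m ^ 2))),
      ((Svec m).filter (fun A => (Finset.univ.filter fun i => A i ≠ 0) = s)).card := by
    apply card_eq_sum_card_fiberwise
    intro A hA
    simp only [Finset.mem_coe] at hA ⊢
    rw [mem_powersetCard_univ]
    exact (mem_filter.mp hA).2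
  rw [key]
  have step : ∀ s ∈ powersetCard m (univ : Finset (Fin (m ^ 2))),
      ((Svec m).filter (fun A => (Finset.univ.filter fun i => A i ≠ 0) = s)).card = 2 ^ m := by
    intro s hs
    rw [mem_powersetCard_univ] at hs
    have : (Svec m).filter (fun A => (Finset.univ.filter fun i => A i ≠ 0) = s)
        = (Fintype.piFinset fun _ => ({-1, 0, 1} : Finset ℤ)).filter
          (fun A => (Finset.univ.filter fun i => A i ≠ 0) = s) := by
      unfold Svec
      rw [filter_filter]
      apply filter_congr
      intro A hA
      constructor
      · rintro ⟨_, h⟩; exact h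
      · intro h; exact ⟨by rw [h, hs], h⟩
    rw [this, card_fiber', hs]
  rw [sum_congr rfl step]
  simp [card_powersetCard, mul_comm]

open Finset in
private lemma card_T' (m : ℕ) (A : Fin (m ^ 2) → ℤ) (hA : A ∈ Svec m) :
    ((Svec m).filter fun B =>
      (Finset.univ.filter fun i => A i ≠ 0 ∧ B i ≠ 0).card = 1).card
      = m * (m ^ 2 - m).choose (m - 1) * 2 ^ m := by
  set a : Finset (Fin (m ^ 2)) := Finset.univ.filter (fun i => A i ≠ 0) with ha_def
  have ha : a.card = m := (mem_filter.mp hA).2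
  have hcond : ∀ B : Fin (m ^ 2) → ℤ,
      (Finset.univ.filter fun i => A i ≠ 0 ∧ B i ≠ 0)
        = a ∩ (Finset.univ.filter fun i => B i ≠ 0) := by
    intro B
    rw [ha_def, ← filter_and]
  set T := (Svec m).filter fun B =>
      (Finset.univ.filter fun i => A i ≠ 0 ∧ B i ≠ 0).card = 1 with hT
  set tgt := (powersetCard m (univ : Finset (Fin (m ^ 2)))).filter
      (fun s => (a ∩ s).card = 1) with htgt
  have key : T.card = ∑ s ∈ tgt,
      (T.filter (fun B => (Finset.univ.filter fun i => B i ≠ 0) = s)).card := by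
    apply card_eq_sum_card_fiberwise
    intro B hB
    simp only [Finset.mem_coe] at hB ⊢
    rw [mem_filter] at hB
    rw [htgt, mem_filter, mem_powersetCard_univ]
    refine ⟨(mem_filter.mp hB.1).2, ?_⟩
    rw [← hcond]
    exact hB.2
  rw [key]
  have step : ∀ s ∈ tgt,
      (T.filter (fun B => (Finset.univ.filter fun i => B i ≠ 0) = s)).card = 2 ^ m := by
    intro s hs
    rw [htgt, mem_filter, mem_powersetCard_univ] at hs
    have : T.filter (fun B => (Finset.univ.filter fun i => B i ≠ 0) = s)
        = (Fintype.piFinset fun _ => ({-1, 0, 1} : Finset ℤ)).filter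
          (fun B => (Finset.univ.filter fun i => B i ≠ 0) = s) := by
      ext B
      rw [hT]
      simp only [Svec, mem_filter]
      constructor
      · rintro ⟨⟨⟨h1, h2⟩, h3⟩, h4⟩; exact ⟨h1, h4⟩
      · rintro ⟨h1, h4⟩
        exact ⟨⟨⟨h1, by rw [h4, hs.1]⟩, by rw [hcond, h4]; exact hs.2⟩, h4⟩
    rw [this, card_fiber', hs.1]
  rw [sum_congr rfl step, sum_const, smul_eq_mul, htgt, card_overlap' (m ^ 2) m a ha]

private lemma prod_le' (m : ℕ) (hm : 2 ≤ m) : ∀ j, j ≤ m - 1 →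
    (m - 1) ^ j * (m ^ 2 - 1).descFactorial j ≤ m ^ j * (m ^ 2 - m).descFactorial j := by
  intro j
  induction j with
  | zero => simp
  | succ j ih =>
    intro hj
    have hj' : j ≤ m - 1 := by omega
    have hjm : j + 2 ≤ m := by omega
    rw [Nat.descFactorial_succ, Nat.descFactorial_succ]
    have hfac : (m - 1) * (m ^ 2 - 1 - j) ≤ m * (m ^ 2 - m - j) := by
      have hmsq : m ≤ m ^ 2 := Nat.le_self_pow two_ne_zero m
      have hmsq2 : 2 * m ≤ m ^ 2 := by nlinarith
      have hc : j ≤ m ^ 2 - 1 := by omega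
      have hd : j ≤ m ^ 2 - m := by omega
      have h1' : 1 ≤ m := by omega
      have h1m : 1 ≤ m ^ 2 := by omega
      have hjm' : (j : ℤ) + 2 ≤ (m : ℤ) := by exact_mod_cast hjm
      zify [h1', hc, hd, h1m, hmsq]
      nlinarith [hjm', sq_nonneg ((m : ℤ) - 1)]
    calc (m - 1) ^ (j + 1) * ((m ^ 2 - 1 - j) * (m ^ 2 - 1).descFactorial j)
        = ((m - 1) * (m ^ 2 - 1 - j)) * ((m - 1) ^ j * (m ^ 2 - 1).descFactorial j) := by ring
      _ ≤ (m * (m ^ 2 - m - j)) * (m ^ j * (m ^ 2 - m).descFactorial j) :=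
          Nat.mul_le_mul hfac (ih hj')
      _ = m ^ (j + 1) * ((m ^ 2 - m - j) * (m ^ 2 - m).descFactorial j) := by ring

private lemma pow_le_three' (m : ℕ) (hm : 2 ≤ m) :
    (m : ℝ) ^ (m - 1) ≤ 3 * ((m : ℝ) - 1) ^ (m - 1) := by
  set n : ℕ := m - 1 with hn
  have hn1 : 1 ≤ n := by omega
  have hnpos : (0 : ℝ) < n := by positivity
  have hmn : (m : ℝ) = (n : ℝ) + 1 := by
    have : m = n + 1 := by omega
    rw [this]; push_cast; ring
  rw [hmn]
  have key : ((n : ℝ) + 1) ^ n = (n : ℝ) ^ n * (1 + 1 / n) ^ n := by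
    rw [← mul_pow]
    congr 1
    field_simp
  rw [key]
  have h1 : (1 + 1 / (n : ℝ)) ^ n ≤ Real.exp 1 := by
    have := Real.add_one_le_exp (1 / (n : ℝ))
    calc (1 + 1 / (n : ℝ)) ^ n ≤ (Real.exp (1 / n)) ^ n := by
          apply pow_le_pow_left₀ (by positivity) (by linarith)
      _ = Real.exp 1 := by
          rw [← Real.exp_nat_mul]
          congr 1
          field_simp
  have h2 : Real.exp 1 ≤ 3 := le_of_lt (lt_trans Real.exp_one_lt_d9 (by norm_num))
  have hsimp : ((n : ℝ) + 1 - 1) = (n : ℝ) := by ring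
  rw [hsimp]
  calc (n : ℝ) ^ n * (1 + 1 / n) ^ n ≤ (n : ℝ) ^ n * 3 := by
        apply mul_le_mul_of_nonneg_left (le_trans h1 h2) (by positivity)
    _ = 3 * (n : ℝ) ^ n := by ring

private lemma choose_ineq' (m : ℕ) (hm : 1 ≤ m) :
    ((m ^ 2).choose m : ℝ) ≤ 3 * m * ((m ^ 2 - m).choose (m - 1) : ℝ) := by
  rcases eq_or_lt_of_le hm with h | h
  · rw [← h]
    norm_num
  · have hm2 : 2 ≤ m := h
    have hd1 : (m ^ 2).descFactorial m = m ^ 2 * (m ^ 2 - 1).descFactorial (m - 1) := by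
      have h1m : 1 ≤ m ^ 2 := Nat.one_le_pow 2 m (by omega)
      have e1 : m ^ 2 - 1 + 1 = m ^ 2 := by omega
      have e2 : m - 1 + 1 = m := by omega
      have h := Nat.succ_descFactorial_succ (m ^ 2 - 1) (m - 1)
      rw [e1, e2] at h
      exact h
    have key : ((m ^ 2 - 1).descFactorial (m - 1) : ℝ)
        ≤ 3 * ((m ^ 2 - m).descFactorial (m - 1) : ℝ) := by
      have h1 := prod_le' m hm2 (m - 1) le_rfl
      have h1' : (((m - 1) : ℕ) : ℝ) ^ (m - 1) * ((m ^ 2 - 1).descFactorial (m - 1) : ℝ)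
          ≤ (m : ℝ) ^ (m - 1) * ((m ^ 2 - m).descFactorial (m - 1) : ℝ) := by
        exact_mod_cast h1
      have hcast : (((m - 1) : ℕ) : ℝ) = (m : ℝ) - 1 := by
        rw [Nat.cast_sub hm]; push_cast; ring
      rw [hcast] at h1'
      have h2 := pow_le_three' m hm2
      have hpos : (0 : ℝ) < ((m : ℝ) - 1) ^ (m - 1) := by
        have : (2 : ℝ) ≤ (m : ℝ) := by exact_mod_cast hm2
        have : (1 : ℝ) ≤ (m : ℝ) - 1 := by linarith
        positivity
      have h3 : ((m : ℝ) - 1) ^ (m - 1) * ((m ^ 2 - 1).descFactorial (m - 1) : ℝ)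
          ≤ ((m : ℝ) - 1) ^ (m - 1) * (3 * ((m ^ 2 - m).descFactorial (m - 1) : ℝ)) := by
        calc ((m : ℝ) - 1) ^ (m - 1) * ((m ^ 2 - 1).descFactorial (m - 1) : ℝ)
            ≤ (m : ℝ) ^ (m - 1) * ((m ^ 2 - m).descFactorial (m - 1) : ℝ) := h1'
          _ ≤ 3 * ((m : ℝ) - 1) ^ (m - 1) * ((m ^ 2 - m).descFactorial (m - 1) : ℝ) := by
              apply mul_le_mul_of_nonneg_right h2 (by positivity)
          _ = ((m : ℝ) - 1) ^ (m - 1) * (3 * ((m ^ 2 - m).descFactorial (m - 1) : ℝ)) := by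
              ring
      exact le_of_mul_le_mul_left h3 hpos
    have e1 : ((m ^ 2).descFactorial m : ℝ) = (m.factorial : ℝ) * ((m ^ 2).choose m : ℝ) := by
      exact_mod_cast congrArg Nat.cast (Nat.descFactorial_eq_factorial_mul_choose (m ^ 2) m)
    have e2 : ((m ^ 2 - m).descFactorial (m - 1) : ℝ)
        = ((m - 1).factorial : ℝ) * ((m ^ 2 - m).choose (m - 1) : ℝ) := by
      exact_mod_cast congrArg Nat.cast
        (Nat.descFactorial_eq_factorial_mul_choose (m ^ 2 - m) (m - 1))
    have e3 : (m.factorial : ℝ) = m * ((m - 1).factorial : ℝ) := by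
      have : m.factorial = m * (m - 1).factorial := by
        conv_lhs => rw [show m = (m - 1) + 1 by omega]
        rw [Nat.factorial_succ]
        congr 1
        omega
      exact_mod_cast this
    have hd1' : ((m ^ 2).descFactorial m : ℝ)
        = (m : ℝ) ^ 2 * ((m ^ 2 - 1).descFactorial (m - 1) : ℝ) := by
      exact_mod_cast congrArg Nat.cast hd1
    have hfacpos : (0 : ℝ) < (m.factorial : ℝ) := by positivity
    rw [← mul_le_mul_iff_right₀ hfacpos]
    calc (m.factorial : ℝ) * ((m ^ 2).choose m : ℝ)
        = (m : ℝ) ^ 2 * ((m ^ 2 - 1).descFactorial (m - 1) : ℝ) := by rw [← e1, hd1']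
      _ ≤ (m : ℝ) ^ 2 * (3 * ((m ^ 2 - m).descFactorial (m - 1) : ℝ)) := by
          apply mul_le_mul_of_nonneg_left key (by positivity)
      _ = (m.factorial : ℝ) * (3 * m * ((m ^ 2 - m).choose (m - 1) : ℝ)) := by
          rw [e2, e3]; ring

theorem stmt10 :
    ∃ c : ℝ, 0 < c ∧ ∀ m : ℕ, 1 ≤ m → ∀ A ∈ Svec m,
      c * ((Svec m).card : ℝ) ≤
        (((Svec m).filter fun B =>
          (Finset.univ.filter fun i => A i ≠ 0 ∧ B i ≠ 0).card = 1).card : ℝ) := by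
  refine ⟨1 / 3, by norm_num, ?_⟩
  intro m hm A hA
  rw [card_Svec' m, card_T' m A hA]
  have hch := choose_ineq' m hm
  have hpow : (0 : ℝ) ≤ (2 : ℝ) ^ m := by positivity
  push_cast
  calc (1 : ℝ) / 3 * (((m ^ 2).choose m : ℝ) * 2 ^ m)
      ≤ 1 / 3 * ((3 * m * ((m ^ 2 - m).choose (m - 1) : ℝ)) * 2 ^ m) := by
        apply mul_le_mul_of_nonneg_left (mul_le_mul_of_nonneg_right hch hpow) (by norm_num)
    _ = (m : ℝ) * ((m ^ 2 - m).choose (m - 1) : ℝ) * 2 ^ m := by ring
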